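/- Exponential moment bound for Rademacher quadratic forms (Lemma A.3). Let u = (u_1, ..., u_n) be a Rademacher random vector with independent coordinates satisfying P(u_i = 1) = P(u_i = -1) = 1/2, and let A be a symmetric n x n real matrix with zero diagonal entries. Then for every kappa with 0 < kappa < 1/(8 ||A||_2), E[ exp( kappa u^T A u ) ] <= exp( 8 kappa^2 ||A||_F^2 / ( 1 - 64 kappa^2 ||A||_2^2 ) ), where ||A||_2 is the operator (spectral) norm and ||A||_F is the Frobenius norm. -/

import Mathlib

open MeasureTheory

/-- Frobenius norm of a real square matrix. -/
noncomputable def frobNorm {n : ℕ} (A : Matrix (Fin n) (Fin n) ℝ) : ℝ :=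
  Real.sqrt (∑ i, ∑ j, (A i j) ^ 2)

/-- The `ℓ₂ → ℓ₂` operator (spectral) norm of a real square matrix. -/
noncomputable def l2OpNorm {n : ℕ} (A : Matrix (Fin n) (Fin n) ℝ) : ℝ :=
  ‖Matrix.toEuclideanCLM (𝕜 := ℝ) A‖

/-- Sign encoding of a Rademacher variable. -/
def radSign (b : Bool) : ℝ := if b then 1 else -1

namespace RadMGF
open Matrix Real Finset
variable {n : ℕ}

def qf (B : Matrix (Fin n) (Fin n) ℝ) (x : Fin n → ℝ) : ℝ := ∑ i, ∑ j, x i * B i j * x j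

lemma qf_eq (B : Matrix (Fin n) (Fin n) ℝ) (x : Fin n → ℝ) : x ⬝ᵥ (B *ᵥ x) = qf B x := by
  simp [qf, dotProduct, Matrix.mulVec, Finset.mul_sum, mul_assoc]

lemma qf_one (x : Fin n → ℝ) : qf 1 x = ∑ i, x i ^ 2 := by
  simp [qf, Matrix.one_apply, mul_ite, ite_mul, pow_two]

lemma qf_smul (c : ℝ) (B : Matrix (Fin n) (Fin n) ℝ) (x : Fin n → ℝ) :
    qf (c • B) x = c * qf B x := by
  simp only [qf, Matrix.smul_apply, smul_eq_mul, Finset.mul_sum]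
  exact Finset.sum_congr rfl fun i _ => Finset.sum_congr rfl fun j _ => by ring

lemma qf_add (B C : Matrix (Fin n) (Fin n) ℝ) (x : Fin n → ℝ) :
    qf (B + C) x = qf B x + qf C x := by
  simp only [qf, Matrix.add_apply, ← Finset.sum_add_distrib]
  exact Finset.sum_congr rfl fun i _ => Finset.sum_congr rfl fun j _ => by ring

lemma qf_sub (B C : Matrix (Fin n) (Fin n) ℝ) (x : Fin n → ℝ) :
    qf (B - C) x = qf B x - qf C x := by
  simp only [qf, Matrix.sub_apply, ← Finset.sum_sub_distrib]
  exact Finset.sum_congr rfl fun i _ => Finset.sum_congr rfl fun j _ => by ring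

lemma qf_vecMulVec (b x : Fin n → ℝ) : qf (vecMulVec b b) x = (b ⬝ᵥ x) ^ 2 := by
  simp only [qf, vecMulVec_apply, dotProduct, pow_two, Finset.sum_mul_sum]
  exact Finset.sum_congr rfl fun i _ => Finset.sum_congr rfl fun j _ => by ring

lemma qf_snoc (B : Matrix (Fin (n+1)) (Fin (n+1)) ℝ) (hB : B.IsSymm) (x : Fin n → ℝ) (t : ℝ) :
    qf B (Fin.snoc x t) = qf (B.submatrix Fin.castSucc Fin.castSucc) x
      + 2 * ((fun i => B i.castSucc (Fin.last n)) ⬝ᵥ x) * t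
      + B (Fin.last n) (Fin.last n) * t ^ 2 := by
  simp only [qf, Fin.sum_univ_castSucc, Fin.snoc_castSucc, Fin.snoc_last, submatrix_apply,
    dotProduct]
  rw [Finset.sum_add_distrib]
  have e2 : ∑ i, x i * B i.castSucc (Fin.last n) * t
      = t * ∑ i, B i.castSucc (Fin.last n) * x i := by
    rw [Finset.mul_sum]; exact Finset.sum_congr rfl fun i _ => by ring
  have e3 : ∑ j, t * B (Fin.last n) j.castSucc * x j
      = t * ∑ i, B i.castSucc (Fin.last n) * x i := by
    rw [Finset.mul_sum]
    exact Finset.sum_congr rfl fun j _ => by rw [hB.apply]; ring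
  rw [e2, e3]; ring

lemma posDef_qf {m : ℕ} {M : Matrix (Fin m) (Fin m) ℝ} (hM : M.PosDef)
    {x : Fin m → ℝ} (hx : x ≠ 0) : 0 < qf M x := by
  have := hM.dotProduct_mulVec_pos hx
  rwa [star_trivial, qf_eq] at this

lemma isHermitian_of_isSymm {m : ℕ} {M : Matrix (Fin m) (Fin m) ℝ} (hM : M.IsSymm) :
    M.IsHermitian := by
  rwa [Matrix.IsHermitian, conjTranspose_eq_transpose_of_trivial]

lemma natAdd_zero_eq_last : (Fin.natAdd n (0 : Fin 1)) = Fin.last n := by ext; simp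

lemma schur_det (M : Matrix (Fin (n+1)) (Fin (n+1)) ℝ)
    (hδ : M (Fin.last n) (Fin.last n) ≠ 0) :
    M.det = M (Fin.last n) (Fin.last n) *
      (M.submatrix Fin.castSucc Fin.castSucc -
        (M (Fin.last n) (Fin.last n))⁻¹ •
          vecMulVec (fun i : Fin n => M i.castSucc (Fin.last n))
            (fun j : Fin n => M (Fin.last n) j.castSucc)).det := by
  set δ := M (Fin.last n) (Fin.last n) with hδdef
  set A₁ : Matrix (Fin n) (Fin n) ℝ := M.submatrix Fin.castSucc Fin.castSucc
  set B₁ : Matrix (Fin n) (Fin 1) ℝ := Matrix.of fun i _ => M i.castSucc (Fin.last n)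
  set C₁ : Matrix (Fin 1) (Fin n) ℝ := Matrix.of fun _ j => M (Fin.last n) j.castSucc
  set D₁ : Matrix (Fin 1) (Fin 1) ℝ := Matrix.of fun _ _ => δ
  letI : Invertible D₁ := ⟨Matrix.of fun _ _ => δ⁻¹,
    by ext i j; fin_cases i; fin_cases j;
       simp [Matrix.mul_apply, D₁, Matrix.one_apply, inv_mul_cancel₀ hδ],
    by ext i j; fin_cases i; fin_cases j;
       simp [Matrix.mul_apply, D₁, Matrix.one_apply, mul_inv_cancel₀ hδ]⟩
  have key : M.submatrix finSumFinEquiv finSumFinEquiv = fromBlocks A₁ B₁ C₁ D₁ := by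
    ext p q
    cases p with
    | inl i => cases q with
      | inl j => rfl
      | inr j =>
          fin_cases j
          simp [Matrix.submatrix_apply, natAdd_zero_eq_last, fromBlocks, B₁]
          rfl
    | inr i => cases q with
      | inl j =>
          fin_cases i
          simp [Matrix.submatrix_apply, natAdd_zero_eq_last, fromBlocks, C₁]
          rfl
      | inr j =>
          fin_cases i; fin_cases j
          simp [Matrix.submatrix_apply, natAdd_zero_eq_last, fromBlocks, D₁]
          rfl
  have hdet : M.det = (fromBlocks A₁ B₁ C₁ D₁).det := by
    rw [← key, det_submatrix_equiv_self]
  rw [hdet, Matrix.det_fromBlocks₂₂]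
  congr 1
  · simp [D₁, Matrix.det_fin_one]
  · congr 1
    ext i j
    simp only [Matrix.sub_apply, Matrix.smul_apply, vecMulVec_apply, smul_eq_mul]
    have hinv : ⅟D₁ = Matrix.of fun _ _ => δ⁻¹ := rfl
    have : (B₁ * ⅟D₁ * C₁) i j
        = M i.castSucc (Fin.last n) * δ⁻¹ * M (Fin.last n) j.castSucc := by
      simp [Matrix.mul_apply, Fin.sum_univ_one, B₁, C₁, hinv]
    rw [this]
    ring

lemma schur_posDef (M : Matrix (Fin (n+1)) (Fin (n+1)) ℝ) (hM : M.IsSymm) (hPD : M.PosDef) :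
    0 < M (Fin.last n) (Fin.last n) ∧
    (M.submatrix Fin.castSucc Fin.castSucc -
      (M (Fin.last n) (Fin.last n))⁻¹ •
        vecMulVec (fun i : Fin n => M i.castSucc (Fin.last n))
          (fun i : Fin n => M i.castSucc (Fin.last n))).PosDef := by
  set δ := M (Fin.last n) (Fin.last n) with hδdef
  set b : Fin n → ℝ := fun i => M i.castSucc (Fin.last n) with hbdef
  have hδ : 0 < δ := by
    have hx : (Pi.single (Fin.last n) 1 : Fin (n+1) → ℝ) ≠ 0 := by
      intro h
      have := congrFun h (Fin.last n)
      simp at this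
    have h := posDef_qf hPD hx
    have heq : qf M (Pi.single (Fin.last n) 1) = δ := by
      simp [qf, Pi.single_apply, ite_mul, mul_ite, Finset.sum_ite_eq']
      rfl
    linarith [heq ▸ h]
  refine ⟨hδ, Matrix.PosDef.of_dotProduct_mulVec_pos ?_ ?_⟩
  · apply isHermitian_of_isSymm
    unfold Matrix.IsSymm
    rw [transpose_sub, transpose_smul, transpose_submatrix, hM.eq]
    congr 1
    ext i j
    simp [vecMulVec_apply, mul_comm]
  · intro x hx
    rw [star_trivial, qf_eq]
    set t : ℝ := -(δ⁻¹ * (b ⬝ᵥ x)) with ht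
    have hsnoc_ne : (Fin.snoc x t : Fin (n+1) → ℝ) ≠ 0 := by
      intro h
      apply hx
      funext i
      have := congrFun h i.castSucc
      simpa [Fin.snoc_castSucc] using this
    have hpos := posDef_qf hPD hsnoc_ne
    have hq := qf_snoc M hM x t
    have hexp : qf (M.submatrix Fin.castSucc Fin.castSucc - δ⁻¹ • vecMulVec b b) x
        = qf M (Fin.snoc x t) := by
      rw [qf_sub, qf_smul, qf_vecMulVec, hq, ht]
      field_simp
      ring
    rw [hexp]
    exact hpos

lemma main_bound : ∀ (m : ℕ) (B : Matrix (Fin m) (Fin m) ℝ), B.IsSymm → (∀ i, 0 ≤ B i i) →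
    (1 - B).PosDef →
    ∑ s : Fin m → Bool, Real.exp (qf B (fun i => radSign (s i)) / 2)
      ≤ 2 ^ m / Real.sqrt (1 - B).det := by
  intro m
  induction m with
  | zero =>
      intro B _ _ _
      have h1 : (1 - B) = 1 := Subsingleton.elim _ _
      simp [qf, h1]
  | succ n ih =>
      intro B hB hdiag hPD
      set d : ℝ := B (Fin.last n) (Fin.last n) with hddef
      set b : Fin n → ℝ := fun i => B i.castSucc (Fin.last n) with hbdef
      set B' : Matrix (Fin n) (Fin n) ℝ := B.submatrix Fin.castSucc Fin.castSucc with hB'def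
      have hMsymm : (1 - B).IsSymm := by
        unfold Matrix.IsSymm
        rw [transpose_sub, transpose_one, hB.eq]
      have hMll : (1 - B) (Fin.last n) (Fin.last n) = 1 - d := by
        simp [Matrix.sub_apply, Matrix.one_apply_eq]
        rfl
      set B'' : Matrix (Fin n) (Fin n) ℝ := B' + (1 - d)⁻¹ • vecMulVec b b with hB''def
      have hschurPD := schur_posDef (1 - B) hMsymm hPD
      have h1d : 0 < 1 - d := by rw [← hMll]; exact hschurPD.1
      have hd0 : 0 ≤ d := hdiag _
      have hfix : (1 - B).submatrix Fin.castSucc Fin.castSucc -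
          ((1 - B) (Fin.last n) (Fin.last n))⁻¹ •
            vecMulVec (fun i : Fin n => (1 - B) i.castSucc (Fin.last n))
              (fun i : Fin n => (1 - B) i.castSucc (Fin.last n)) = 1 - B'' := by
        rw [hMll]
        ext i j
        have hne : (i.castSucc : Fin (n+1)) ≠ Fin.last n := (Fin.castSucc_lt_last i).ne
        have hne' : (j.castSucc : Fin (n+1)) ≠ Fin.last n := (Fin.castSucc_lt_last j).ne
        simp only [Matrix.sub_apply, Matrix.smul_apply, Matrix.add_apply,
          Matrix.submatrix_apply, Matrix.one_apply, vecMulVec_apply, smul_eq_mul,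
          Fin.castSucc_inj, Matrix.one_apply_ne hne, hB''def, hB'def, hbdef]
        rw [if_neg hne, if_neg hne']
        ring
      have hPD'' : (1 - B'').PosDef := by
        have := hschurPD.2
        rwa [hfix] at this
      have hdet : (1 - B).det = (1 - d) * (1 - B'').det := by
        have hvecfix : (fun j : Fin n => (1 - B) (Fin.last n) j.castSucc)
            = fun i : Fin n => (1 - B) i.castSucc (Fin.last n) := by
          funext j
          rw [hMsymm.apply]
        rw [schur_det (1 - B) (by rw [hMll]; exact h1d.ne'), hMll, hvecfix]
        congr 1
        rw [← hMll]
        rw [hfix]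
      have hDpos : 0 < (1 - B'').det := hPD''.det_pos
      have hB''symm : B''.IsSymm := by
        unfold Matrix.IsSymm
        ext i j
        simp [hB''def, hB'def, Matrix.transpose_apply, vecMulVec_apply, hB.apply, mul_comm]
      have hdiag'' : ∀ i, 0 ≤ B'' i i := by
        intro i
        have : B'' i i = B i.castSucc i.castSucc + (1-d)⁻¹ * (b i * b i) := by
          simp [hB''def, hB'def, vecMulVec_apply]
        rw [this]
        have : 0 ≤ (1-d)⁻¹ * (b i * b i) :=
          mul_nonneg (inv_nonneg.mpr h1d.le) (mul_self_nonneg _)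
        have hd2 := hdiag i.castSucc
        linarith
      have hIH := ih B'' hB''symm hdiag'' hPD''
      -- pointwise bound over the last coordinate
      have hpoint : ∀ s' : Fin n → Bool,
          ∑ ε : Bool, Real.exp (qf B (Fin.snoc (fun i => radSign (s' i)) (radSign ε)) / 2)
          ≤ 2 * Real.exp (d / 2) * Real.exp (qf B'' (fun i => radSign (s' i)) / 2) := by
        intro s'
        set x : Fin n → ℝ := fun i => radSign (s' i) with hx
        set c : ℝ := b ⬝ᵥ x with hc
        set q : ℝ := qf B' x with hqdef
        have hsnoc : ∀ r : ℝ, qf B (Fin.snoc x r) = q + 2 * c * r + d * r ^ 2 :=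
          fun r => qf_snoc B hB x r
        have htrue : radSign true = 1 := rfl
        have hfalse : radSign false = -1 := rfl
        rw [Fintype.sum_bool, hsnoc, hsnoc, htrue, hfalse]
        have e1 : (q + 2*c*1 + d*1^2)/2 = (q+d)/2 + c := by ring
        have e2 : (q + 2*c*(-1) + d*(-1)^2)/2 = (q+d)/2 + (-c) := by ring
        rw [e1, e2, Real.exp_add, Real.exp_add]
        have hcosh : Real.exp c + Real.exp (-c) = 2 * Real.cosh c := by
          rw [Real.cosh_eq]; ring
        have hch : Real.cosh c ≤ Real.exp (c^2/2) := Real.cosh_le_exp_half_sq c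
        have hfac : Real.exp ((q+d)/2) * Real.exp c + Real.exp ((q+d)/2) * Real.exp (-c)
            = Real.exp ((q+d)/2) * (2 * Real.cosh c) := by rw [← hcosh]; ring
        rw [hfac]
        have hqB'' : qf B'' x = q + (1-d)⁻¹ * c^2 := by
          rw [hB''def, qf_add, qf_smul, qf_vecMulVec, ← hqdef, ← hc]
        have hinv1 : 1 ≤ (1-d)⁻¹ := by
          have h := mul_inv_cancel₀ h1d.ne'
          have hinvpos : 0 < (1-d)⁻¹ := inv_pos.mpr h1d
          nlinarith
        have harg : (q+d)/2 + c^2/2 ≤ qf B'' x / 2 + d/2 := by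
          rw [hqB'']
          nlinarith [sq_nonneg c]
        calc Real.exp ((q+d)/2) * (2 * Real.cosh c)
            ≤ Real.exp ((q+d)/2) * (2 * Real.exp (c^2/2)) := by
              have h0 := Real.exp_pos ((q+d)/2)
              nlinarith
          _ = 2 * Real.exp ((q+d)/2 + c^2/2) := by rw [Real.exp_add]; ring
          _ ≤ 2 * Real.exp (qf B'' x / 2 + d/2) := by
              have := Real.exp_le_exp.mpr harg; linarith
          _ = 2 * Real.exp (d/2) * Real.exp (qf B'' x / 2) := by rw [Real.exp_add]; ring
      -- split the sum over the last coordinate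
      have hsum : ∑ s : Fin (n+1) → Bool, Real.exp (qf B (fun i => radSign (s i)) / 2)
          = ∑ p : Bool × (Fin n → Bool),
              Real.exp (qf B (Fin.snoc (fun i => radSign (p.2 i)) (radSign p.1)) / 2) := by
        refine (Fintype.sum_equiv (Fin.insertNthEquiv (fun _ => Bool) (Fin.last n))
          _ _ fun p => ?_).symm
        have hins : (Fin.insertNthEquiv (fun _ => Bool) (Fin.last n)) p
            = Fin.snoc p.2 p.1 := by
          simp [Fin.insertNthEquiv, Fin.insertNth_last']
        rw [hins]
        have hv : (Fin.snoc (fun i => radSign (p.2 i)) (radSign p.1) : Fin (n+1) → ℝ)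
            = fun i => radSign ((Fin.snoc p.2 p.1 : Fin (n+1) → Bool) i) := by
          funext i
          refine Fin.lastCases ?_ (fun j => ?_) i <;> simp
        rw [hv]
      have hprod : ∑ p : Bool × (Fin n → Bool),
              Real.exp (qf B (Fin.snoc (fun i => radSign (p.2 i)) (radSign p.1)) / 2)
          = ∑ s' : Fin n → Bool, ∑ ε : Bool,
              Real.exp (qf B (Fin.snoc (fun i => radSign (s' i)) (radSign ε)) / 2) := by
        rw [Fintype.sum_prod_type]
        rw [Finset.sum_comm]
      rw [hsum, hprod]
      have hstep : ∑ s' : Fin n → Bool, ∑ ε : Bool,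
              Real.exp (qf B (Fin.snoc (fun i => radSign (s' i)) (radSign ε)) / 2)
          ≤ 2 * Real.exp (d/2) * (2^n / Real.sqrt (1 - B'').det) := by
        calc ∑ s' : Fin n → Bool, ∑ ε : Bool,
              Real.exp (qf B (Fin.snoc (fun i => radSign (s' i)) (radSign ε)) / 2)
            ≤ ∑ s' : Fin n → Bool,
                2 * Real.exp (d/2) * Real.exp (qf B'' (fun i => radSign (s' i)) / 2) :=
              Finset.sum_le_sum fun s' _ => hpoint s'
          _ = 2 * Real.exp (d/2) *
                ∑ s' : Fin n → Bool, Real.exp (qf B'' (fun i => radSign (s' i)) / 2) := by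
              rw [Finset.mul_sum]
          _ ≤ 2 * Real.exp (d/2) * (2^n / Real.sqrt (1 - B'').det) := by
              have h2 : 0 < 2 * Real.exp (d/2) := by positivity
              exact mul_le_mul_of_nonneg_left hIH h2.le
      refine le_trans hstep ?_
      -- final arithmetic
      rw [hdet]
      set Dpp := (1 - B'').det
      have hsD : 0 < Real.sqrt Dpp := Real.sqrt_pos.mpr hDpos
      have hs1 : 0 < Real.sqrt (1 - d) := Real.sqrt_pos.mpr h1d
      rw [Real.sqrt_mul h1d.le]
      have key : Real.exp (d/2) * Real.sqrt (1-d) ≤ 1 := by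
        have hexp2 : Real.exp (d/2) = Real.sqrt (Real.exp d) := by
          rw [show Real.exp d = Real.exp (d/2) ^ 2 by
            rw [sq, ← Real.exp_add]; norm_num]
          rw [Real.sqrt_sq (Real.exp_pos _).le]
        rw [hexp2, ← Real.sqrt_mul (Real.exp_pos d).le]
        have h2 : Real.exp d * (1 - d) ≤ 1 := by
          have h3 := Real.add_one_le_exp (-d)
          have h4 : Real.exp d * Real.exp (-d) = 1 := by
            rw [← Real.exp_add]; simp
          nlinarith [Real.exp_pos d]
        calc Real.sqrt (Real.exp d * (1 - d)) ≤ Real.sqrt 1 := Real.sqrt_le_sqrt h2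
          _ = 1 := Real.sqrt_one
      rw [← mul_div_assoc, div_le_div_iff₀ hsD (by positivity)]
      have hmul : Real.exp (d/2) * Real.sqrt (1-d) * Real.sqrt Dpp ≤ Real.sqrt Dpp := by
        have h6 := mul_le_mul_of_nonneg_right key hsD.le
        linarith
      have hpow : (2:ℝ)^(n+1) = 2^n * 2 := pow_succ 2 n
      nlinarith [mul_le_mul_of_nonneg_left hmul (by positivity : (0:ℝ) ≤ 2 * 2^n)]
variable {n : ℕ}

lemma ofReal_real_id : (RCLike.ofReal : ℝ → ℝ) = id := rfl

lemma det_one_sub_smul (A : Matrix (Fin n) (Fin n) ℝ) (hH : A.IsHermitian) (c : ℝ) :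
    (1 - c • A).det = ∏ i, (1 - c * hH.eigenvalues i) := by
  set U : Matrix (Fin n) (Fin n) ℝ := ↑hH.eigenvectorUnitary with hU
  have hUU : star U * U = 1 := Matrix.mem_unitaryGroup_iff'.mp (hH.eigenvectorUnitary).2
  have hUU' : U * star U = 1 := Matrix.mem_unitaryGroup_iff.mp (hH.eigenvectorUnitary).2
  have hDiag : star U * A * U = diagonal (RCLike.ofReal ∘ hH.eigenvalues) :=
    by have := hH.conjStarAlgAut_star_eigenvectorUnitary; rwa [Unitary.conjStarAlgAut_star_apply] at this
  have hdetU : (star U).det * U.det = 1 := by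
    rw [← Matrix.det_mul, hUU, Matrix.det_one]
  have hkey : star U * (1 - c • A) * U = 1 - c • diagonal (RCLike.ofReal ∘ hH.eigenvalues) := by
    rw [Matrix.mul_sub, Matrix.sub_mul, Matrix.mul_one, hUU, Matrix.mul_smul, Matrix.smul_mul,
      hDiag]
  have hdet2 : (1 - c • A).det = ((1 : Matrix (Fin n) (Fin n) ℝ) - c • diagonal (RCLike.ofReal ∘ hH.eigenvalues)).det := by
    rw [← hkey, Matrix.det_mul, Matrix.det_mul]
    linear_combination (-((1 - c • A).det)) * hdetU
  rw [hdet2]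
  have : (1 : Matrix (Fin n) (Fin n) ℝ) - c • diagonal (RCLike.ofReal ∘ hH.eigenvalues)
      = diagonal (fun i => 1 - c * hH.eigenvalues i) := by
    rw [← Matrix.diagonal_one, ← Matrix.diagonal_smul, ← Matrix.diagonal_sub]
    rfl
  rw [this, Matrix.det_diagonal]

lemma sum_eigenvalues_eq_trace (A : Matrix (Fin n) (Fin n) ℝ) (hH : A.IsHermitian) :
    ∑ i, hH.eigenvalues i = A.trace := by
  have hUU : star (hH.eigenvectorUnitary : Matrix (Fin n) (Fin n) ℝ) *
      hH.eigenvectorUnitary = 1 := Matrix.mem_unitaryGroup_iff'.mp (hH.eigenvectorUnitary).2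
  conv_rhs => rw [hH.spectral_theorem, Unitary.conjStarAlgAut_apply]
  rw [Matrix.trace_mul_comm, ← Matrix.mul_assoc, hUU, Matrix.one_mul, Matrix.trace_diagonal]
  simp [ofReal_real_id]

lemma sum_sq_eigenvalues_eq_trace (A : Matrix (Fin n) (Fin n) ℝ) (hH : A.IsHermitian) :
    ∑ i, (hH.eigenvalues i) ^ 2 = (A * A).trace := by
  have hUU' : (hH.eigenvectorUnitary : Matrix (Fin n) (Fin n) ℝ) *
      star (hH.eigenvectorUnitary : Matrix (Fin n) (Fin n) ℝ) = 1 :=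
    Matrix.mem_unitaryGroup_iff.mp (hH.eigenvectorUnitary).2
  have hDiag : star (hH.eigenvectorUnitary : Matrix (Fin n) (Fin n) ℝ) * A *
      (hH.eigenvectorUnitary : Matrix (Fin n) (Fin n) ℝ) = diagonal (RCLike.ofReal ∘ hH.eigenvalues) :=
    by have := hH.conjStarAlgAut_star_eigenvectorUnitary; rwa [Unitary.conjStarAlgAut_star_apply] at this
  have h1 : Matrix.trace ((diagonal (RCLike.ofReal ∘ hH.eigenvalues) : Matrix (Fin n) (Fin n) ℝ) *
      diagonal (RCLike.ofReal ∘ hH.eigenvalues)) = ∑ i, (hH.eigenvalues i)^2 := by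
    rw [Matrix.diagonal_mul_diagonal, Matrix.trace_diagonal]
    simp [ofReal_real_id, sq]
  rw [← h1, ← hDiag]
  set U : Matrix (Fin n) (Fin n) ℝ := ↑hH.eigenvectorUnitary
  calc (star U * A * U * (star U * A * U)).trace
      = (star U * (A * A) * U).trace := by
        rw [show star U * A * U * (star U * A * U) = star U * A * (U * star U) * A * U by
          noncomm_ring]
        rw [hUU', Matrix.mul_one, Matrix.mul_assoc (star U) A A, ← Matrix.mul_assoc]
    _ = (A * A).trace := by
        rw [Matrix.trace_mul_cycle, ← Matrix.mul_assoc, hUU', Matrix.one_mul]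

lemma eig_abs_le (A : Matrix (Fin n) (Fin n) ℝ) (hH : A.IsHermitian) (i : Fin n) :
    |hH.eigenvalues i| ≤ l2OpNorm A := by
  set v : EuclideanSpace ℝ (Fin n) := hH.eigenvectorBasis i with hv
  have hnv : ‖v‖ = 1 := hH.eigenvectorBasis.orthonormal.1 i
  have hclm : Matrix.toEuclideanCLM (𝕜 := ℝ) A v = hH.eigenvalues i • v := by
    apply (WithLp.equiv 2 _).injective
    rw [WithLp.equiv_apply, Matrix.ofLp_toEuclideanCLM]
    exact hH.mulVec_eigenvectorBasis i
  have h3 : ‖Matrix.toEuclideanCLM (𝕜 := ℝ) A v‖ ≤ l2OpNorm A * ‖v‖ :=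
    (Matrix.toEuclideanCLM (𝕜 := ℝ) A).le_opNorm v
  rw [hclm, norm_smul, hnv] at h3
  simpa using h3

lemma abs_dot_mulVec_le (A : Matrix (Fin n) (Fin n) ℝ) (x : Fin n → ℝ) :
    |x ⬝ᵥ (A *ᵥ x)| ≤ l2OpNorm A * ∑ i, x i ^ 2 := by
  set y : EuclideanSpace ℝ (Fin n) := (WithLp.equiv 2 _).symm x with hy
  have h1 : x ⬝ᵥ (A *ᵥ x) = inner ℝ y (Matrix.toEuclideanCLM (𝕜 := ℝ) A y) := by
    rw [Matrix.inner_toEuclideanCLM]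
    rfl
  have h2 : ‖y‖ ^ 2 = ∑ i, x i ^ 2 := by
    rw [EuclideanSpace.norm_eq, Real.sq_sqrt (by positivity)]
    refine Finset.sum_congr rfl fun i _ => ?_
    rw [show y i = x i from rfl, Real.norm_eq_abs, sq_abs]
  rw [h1]
  calc |inner ℝ y (Matrix.toEuclideanCLM (𝕜 := ℝ) A y)|
      ≤ ‖y‖ * ‖Matrix.toEuclideanCLM (𝕜 := ℝ) A y‖ := abs_real_inner_le_norm _ _
    _ ≤ ‖y‖ * (l2OpNorm A * ‖y‖) := by
        refine mul_le_mul_of_nonneg_left ?_ (norm_nonneg _)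
        exact (Matrix.toEuclideanCLM (𝕜 := ℝ) A).le_opNorm y
    _ = l2OpNorm A * ‖y‖ ^ 2 := by ring
    _ = l2OpNorm A * ∑ i, x i ^ 2 := by rw [h2]

lemma final_ineq {κ L F2 : ℝ} (hκ0 : 0 < κ) (hL : 0 < L) (hF2 : 0 ≤ F2)
    (hκL : 8 * κ * L < 1) :
    2 * κ ^ 2 * F2 / (1 - 2 * κ * L) ≤ 8 * κ ^ 2 * F2 / (1 - 64 * κ ^ 2 * L ^ 2) := by
  have h1c : 0 < 1 - 2 * κ * L := by nlinarith
  have hs1 : 0 < 1 - 64 * κ ^ 2 * L ^ 2 := by nlinarith [mul_pos hκ0 hL]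
  rw [div_le_div_iff₀ h1c hs1]
  nlinarith [mul_nonneg (mul_nonneg (by positivity : (0:ℝ) ≤ κ ^ 2) hF2)
      (sq_nonneg (8 * κ * L - 1/2)),
    mul_nonneg (by positivity : (0:ℝ) ≤ κ ^ 2) hF2]

lemma one_sub_bound {x c : ℝ} (hc : c < 1) (hx : |x| ≤ c) :
    Real.exp (-x - x ^ 2 / (1 - c)) ≤ 1 - x := by
  have h1c : 0 < 1 - c := by linarith
  have habs := abs_le.mp hx
  set q := x ^ 2 / (1 - c) with hq
  have hq0 : 0 ≤ q := by positivity
  have hqc : q * (1 - c) = x ^ 2 := by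
    rw [hq, div_mul_cancel₀ _ h1c.ne']
  have hpos : 0 < 1 + x + q := by nlinarith
  have hexp : 1 + x + q ≤ Real.exp (x + q) := by
    have := Real.add_one_le_exp (x + q); linarith
  have hxlt : x < 1 := lt_of_le_of_lt habs.2 hc
  have h1x : 0 < 1 - x := by linarith
  have hmul : 1 ≤ (1 - x) * (1 + x + q) := by nlinarith [mul_nonneg hq0 (sub_nonneg.mpr habs.2)]
  rw [show -x - q = -(x + q) by ring, Real.exp_neg]
  have h5 : (Real.exp (x + q))⁻¹ ≤ (1 + x + q)⁻¹ := by
    apply inv_anti₀ hpos hexp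
  refine le_trans h5 ?_
  rw [inv_eq_one_div, div_le_iff₀ hpos]
  nlinarith

end RadMGF

open Matrix Real Finset RadMGF

/-- **Exponential moment bound for Rademacher quadratic forms.**
Let `u = (u₁,…,uₙ)` be a vector of i.i.d. Rademacher signs (uniform on `{-1,1}ⁿ`) and `A`
a symmetric `n × n` real matrix with zero diagonal.  For `0 < κ < 1/(8‖A‖₂)`:
`E[exp(κ uᵀ A u)] ≤ exp(8 κ² ‖A‖_F² / (1 - 64 κ² ‖A‖₂²))`. -/
theorem rademacher_quadratic_mgf (n : ℕ) (A : Matrix (Fin n) (Fin n) ℝ)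
    (hA : A.IsSymm) (hdiag : ∀ i, A i i = 0)
    (κ : ℝ) (hκ0 : 0 < κ) (hκ : κ < 1 / (8 * l2OpNorm A)) :
    (∫ s, Real.exp (κ * ∑ i, ∑ j, radSign (s i) * A i j * radSign (s j))
        ∂((PMF.uniformOfFintype (Fin n → Bool)).toMeasure))
      ≤ Real.exp (8 * κ ^ 2 * (frobNorm A) ^ 2 / (1 - 64 * κ ^ 2 * (l2OpNorm A) ^ 2)) := by
  classical
  set L := l2OpNorm A with hLdef
  have hL0 : 0 ≤ L := norm_nonneg _
  have hLpos : 0 < L := by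
    rcases hL0.lt_or_eq with h | h
    · exact h
    · exfalso
      rw [← h] at hκ
      simp at hκ
      linarith
  have hκL : 8 * κ * L < 1 := by
    rw [lt_div_iff₀ (by positivity)] at hκ
    nlinarith
  have hH : A.IsHermitian := RadMGF.isHermitian_of_isSymm hA
  set lam := hH.eigenvalues with hlam
  have hqfA : ∀ x : Fin n → ℝ, |RadMGF.qf A x| ≤ L * ∑ i, x i ^ 2 := by
    intro x; rw [← RadMGF.qf_eq]; exact RadMGF.abs_dot_mulVec_le A x
  have hPD : (1 - (2 * κ) • A).PosDef := by
    refine Matrix.PosDef.of_dotProduct_mulVec_pos (RadMGF.isHermitian_of_isSymm ?_) ?_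
    · unfold Matrix.IsSymm
      rw [transpose_sub, transpose_one, transpose_smul, hA.eq]
    · intro x hx
      rw [star_trivial, RadMGF.qf_eq, RadMGF.qf_sub, RadMGF.qf_smul, RadMGF.qf_one]
      obtain ⟨i, hi⟩ := Function.ne_iff.mp hx
      have hsum_pos : 0 < ∑ i, x i ^ 2 :=
        Finset.sum_pos' (fun j _ => sq_nonneg _)
          ⟨i, Finset.mem_univ i, by nlinarith [sq_nonneg (x i), abs_pos.mpr hi, sq_abs (x i)]⟩
      have h1 := (abs_le.mp (hqfA x)).2
      nlinarith
  have hmain := RadMGF.main_bound n ((2 * κ) • A)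
    (by unfold Matrix.IsSymm; rw [transpose_smul, hA.eq])
    (fun i => by simp [hdiag i]) hPD
  have hDdet : 0 < (1 - (2 * κ) • A).det := hPD.det_pos
  have hsD : 0 < Real.sqrt (1 - (2 * κ) • A).det := Real.sqrt_pos.mpr hDdet
  -- rewrite the integral as a normalized sum
  rw [PMF.integral_eq_sum]
  have hw : ∀ s : Fin n → Bool, ((PMF.uniformOfFintype (Fin n → Bool)) s).toReal
      = ((2:ℝ) ^ n)⁻¹ := by
    intro s
    rw [PMF.uniformOfFintype_apply]
    simp [Fintype.card_fun, ENNReal.toReal_inv]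
  have hexp_eq : ∀ s : Fin n → Bool,
      κ * (∑ i, ∑ j, radSign (s i) * A i j * radSign (s j))
        = RadMGF.qf ((2 * κ) • A) (fun i => radSign (s i)) / 2 := by
    intro s
    rw [RadMGF.qf_smul,
      show (∑ i, ∑ j, radSign (s i) * A i j * radSign (s j))
        = RadMGF.qf A (fun i => radSign (s i)) from rfl]
    ring
  have hsum_eq : ∑ s : Fin n → Bool,
        ((PMF.uniformOfFintype (Fin n → Bool)) s).toReal
          • Real.exp (κ * ∑ i, ∑ j, radSign (s i) * A i j * radSign (s j))
      = ((2:ℝ) ^ n)⁻¹ * ∑ s : Fin n → Bool,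
          Real.exp (RadMGF.qf ((2 * κ) • A) (fun i => radSign (s i)) / 2) := by
    rw [Finset.mul_sum]
    exact Finset.sum_congr rfl fun s _ => by rw [hw s, hexp_eq s, smul_eq_mul]
  rw [hsum_eq]
  have hstep1 : ((2:ℝ) ^ n)⁻¹ * ∑ s : Fin n → Bool,
        Real.exp (RadMGF.qf ((2 * κ) • A) (fun i => radSign (s i)) / 2)
      ≤ 1 / Real.sqrt (1 - (2 * κ) • A).det := by
    have h2 : (0:ℝ) < 2 ^ n := by positivity
    calc ((2:ℝ) ^ n)⁻¹ * ∑ s : Fin n → Bool,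
          Real.exp (RadMGF.qf ((2 * κ) • A) (fun i => radSign (s i)) / 2)
        ≤ ((2:ℝ) ^ n)⁻¹ * (2 ^ n / Real.sqrt (1 - (2 * κ) • A).det) :=
          mul_le_mul_of_nonneg_left hmain (by positivity)
      _ = 1 / Real.sqrt (1 - (2 * κ) • A).det := by field_simp
  refine le_trans hstep1 ?_
  -- eigenvalue estimates
  set F2 : ℝ := ∑ i, ∑ j, A i j ^ 2 with hF2def
  have hF2 : 0 ≤ F2 := by positivity
  have hfrob : (frobNorm A) ^ 2 = F2 := Real.sq_sqrt (by positivity)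
  have htr0 : ∑ i, lam i = 0 := by
    rw [hlam, RadMGF.sum_eigenvalues_eq_trace A hH]
    simp [Matrix.trace, Matrix.diag, hdiag]
  have hsq : ∑ i, lam i ^ 2 = F2 := by
    rw [hlam, RadMGF.sum_sq_eigenvalues_eq_trace A hH]
    simp only [Matrix.trace, Matrix.diag, Matrix.mul_apply, hF2def]
    exact Finset.sum_congr rfl fun i _ => Finset.sum_congr rfl fun j _ => by
      rw [hA.apply i j, sq]
  set c : ℝ := 2 * κ * L with hcdef
  have hc0 : 0 < c := by positivity
  have hc1 : c < 1 := by nlinarith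
  have h1c : 0 < 1 - c := by linarith
  have habs : ∀ i, |2 * κ * lam i| ≤ c := by
    intro i
    rw [show (2 * κ * lam i) = (2 * κ) * lam i by ring, abs_mul,
      abs_of_pos (by positivity : (0:ℝ) < 2 * κ)]
    have := RadMGF.eig_abs_le A hH i
    rw [hcdef]
    nlinarith
  have hdet_eq : (1 - (2 * κ) • A).det = ∏ i, (1 - 2 * κ * lam i) := by
    rw [RadMGF.det_one_sub_smul A hH (2 * κ)]
  have hprod_ge : Real.exp (∑ i, (-(2 * κ * lam i) - (2 * κ * lam i) ^ 2 / (1 - c)))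
      ≤ ∏ i, (1 - 2 * κ * lam i) := by
    rw [Real.exp_sum]
    exact Finset.prod_le_prod (fun i _ => (Real.exp_pos _).le)
      (fun i _ => RadMGF.one_sub_bound hc1 (habs i))
  have hsum_val : ∑ i, (-(2 * κ * lam i) - (2 * κ * lam i) ^ 2 / (1 - c))
      = -(4 * κ ^ 2 * F2 / (1 - c)) := by
    have hterm : ∀ i : Fin n, -(2 * κ * lam i) - (2 * κ * lam i) ^ 2 / (1 - c)
        = (-(2 * κ)) * lam i + (-(4 * κ ^ 2 / (1 - c))) * lam i ^ 2 := by
      intro i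
      ring
    rw [Finset.sum_congr rfl fun i _ => hterm i, Finset.sum_add_distrib,
      ← Finset.mul_sum, ← Finset.mul_sum, htr0, hsq]
    ring
  have hdet_ge : Real.exp (-(4 * κ ^ 2 * F2 / (1 - c))) ≤ (1 - (2 * κ) • A).det := by
    rw [hdet_eq, ← hsum_val]
    exact hprod_ge
  have hsqrt_exp : ∀ t : ℝ, Real.sqrt (Real.exp t) = Real.exp (t / 2) := by
    intro t
    rw [show Real.exp t = Real.exp (t / 2) ^ 2 by rw [sq, ← Real.exp_add]; norm_num,
      Real.sqrt_sq (Real.exp_pos _).le]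
  have hsqrt_ge : Real.exp (-(2 * κ ^ 2 * F2 / (1 - c)))
      ≤ Real.sqrt (1 - (2 * κ) • A).det := by
    have h := Real.sqrt_le_sqrt hdet_ge
    rw [hsqrt_exp] at h
    calc Real.exp (-(2 * κ ^ 2 * F2 / (1 - c)))
        = Real.exp (-(4 * κ ^ 2 * F2 / (1 - c)) / 2) := by congr 1; ring
      _ ≤ Real.sqrt (1 - (2 * κ) • A).det := h
  have hfinal1 : 1 / Real.sqrt (1 - (2 * κ) • A).det
      ≤ Real.exp (2 * κ ^ 2 * F2 / (1 - c)) := by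
    rw [div_le_iff₀ hsD]
    have h2 : Real.exp (2 * κ ^ 2 * F2 / (1 - c)) * Real.exp (-(2 * κ ^ 2 * F2 / (1 - c)))
        = 1 := by rw [← Real.exp_add]; simp
    calc (1:ℝ) = Real.exp (2 * κ ^ 2 * F2 / (1 - c))
          * Real.exp (-(2 * κ ^ 2 * F2 / (1 - c))) := h2.symm
      _ ≤ Real.exp (2 * κ ^ 2 * F2 / (1 - c)) * Real.sqrt (1 - (2 * κ) • A).det :=
          mul_le_mul_of_nonneg_left hsqrt_ge (Real.exp_pos _).le
  refine le_trans hfinal1 ?_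
  rw [hfrob]
  exact Real.exp_le_exp.mpr (RadMGF.final_ineq hκ0 hLpos hF2 hκL)
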